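/- Let E be a real Banach space and 𝓚 ⊆ E nonempty closed convex. Let F : [0,1] × 𝓚 → (nonempty subsets of E) be Hausdorff upper semicontinuous (jointly in (t,x)), suppose there is c > 0 with ‖y‖ ≤ c(1 + ‖x‖) for all t ∈ [0,1], x ∈ 𝓚, y ∈ F(t,x), and suppose F(t,x) ∩ T_𝓚(x) ≠ ∅ for all t, x. Define F̂(t,x) := closure(convexHull(⋃_{0≤s≤t} F(s,x))). Then: (i) the map (t,x) ↦ ⋃_{0≤s≤t} F(s,x) is Hausdorff upper semicontinuous on [0,1] × 𝓚; (ii) F̂ is Hausdorff upper semicontinuous on [0,1] × 𝓚; (iii) each F̂(t,x) is nonempty closed convex and ‖y‖ ≤ c(1 + ‖x‖) for all y ∈ F̂(t,x); and (iv) F̂(t,x) ∩ T_𝓚(x) ≠ ∅ for all t ∈ [0,1], x ∈ 𝓚. -/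

import Mathlib

open Metric Set

/-- Auxiliary: passing a uniform `infDist` bound through closed convex hulls. -/
lemma hull_infDist_transfer {E : Type*} [NormedAddCommGroup E] [NormedSpace ℝ E]
    {A B : Set E} (hB : B.Nonempty) {r : ℝ} (hr : 0 ≤ r)
    (h : ∀ y ∈ A, Metric.infDist y B < r) :
    ∀ y ∈ closure (convexHull ℝ A),
      Metric.infDist y (closure (convexHull ℝ B)) ≤ r := by
  have h1 : A ⊆ thickening r B := fun y hy =>
    mem_thickening_iff.2 ((infDist_lt_iff hB).1 (h y hy))
  have h2 : convexHull ℝ A ⊆ thickening r (convexHull ℝ B) :=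
    convexHull_min (h1.trans (thickening_subset_of_subset r (subset_convexHull ℝ B)))
      ((convex_convexHull ℝ B).thickening r)
  have h3 : closure (convexHull ℝ A) ⊆ cthickening r (convexHull ℝ B) :=
    (closure_mono h2).trans (closure_thickening_subset_cthickening r _)
  intro y hy
  have h4 := mem_cthickening_iff.1 (h3 hy)
  rw [infDist_closure, Metric.infDist]
  calc (EMetric.infEdist y (convexHull ℝ B)).toReal
      ≤ (ENNReal.ofReal r).toReal := ENNReal.toReal_mono ENNReal.ofReal_ne_top h4
    _ = r := ENNReal.toReal_ofReal hr

/-- If `F : [0,1] × 𝓚 ⊸ E` is jointly H-usc, has sublinear growth and is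
tangent to `𝓚`, then `F̂(t,x) := cl conv (⋃_{0≤s≤t} F(s,x))` has the same properties:
(i) `(t,x) ↦ ⋃_{0≤s≤t} F(s,x)` is H-usc; (ii) `F̂` is H-usc; (iii) the values of `F̂` are
nonempty closed convex with `‖y‖ ≤ c(1+‖x‖)`; (iv) `F̂` is tangent to `𝓚`. -/
theorem hull_of_history_map_properties
    {E : Type*} [NormedAddCommGroup E] [NormedSpace ℝ E] [CompleteSpace E]
    (𝓚 : Set E) (hne : 𝓚.Nonempty) (hcl : IsClosed 𝓚) (hconv : Convex ℝ 𝓚)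
    (F : ℝ → E → Set E)
    (hFne : ∀ t ∈ Set.Icc (0:ℝ) 1, ∀ x ∈ 𝓚, (F t x).Nonempty)
    (hFusc : ∀ t₀ ∈ Set.Icc (0:ℝ) 1, ∀ x₀ ∈ 𝓚, ∀ ε > (0:ℝ), ∃ δ > (0:ℝ),
      ∀ t ∈ Set.Icc (0:ℝ) 1, ∀ x ∈ 𝓚, |t - t₀| < δ → ‖x - x₀‖ < δ →
        F t x ⊆ {y : E | Metric.infDist y (F t₀ x₀) < ε})
    (c : ℝ) (hc : 0 < c)
    (hF3 : ∀ t ∈ Set.Icc (0:ℝ) 1, ∀ x ∈ 𝓚, ∀ y ∈ F t x, ‖y‖ ≤ c * (1 + ‖x‖))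
    (hF4 : ∀ t ∈ Set.Icc (0:ℝ) 1, ∀ x ∈ 𝓚,
      (F t x ∩ closure (⋃ h ∈ Set.Ioi (0:ℝ), (fun k => h⁻¹ • (k - x)) '' 𝓚)).Nonempty)
    (Fhat : ℝ → E → Set E)
    (hFhat : ∀ t x, Fhat t x = closure (convexHull ℝ (⋃ s ∈ Set.Icc (0:ℝ) t, F s x))) :
    -- (i) the union map is H-usc
    (∀ t₀ ∈ Set.Icc (0:ℝ) 1, ∀ x₀ ∈ 𝓚, ∀ ε > (0:ℝ), ∃ δ > (0:ℝ),
      ∀ t ∈ Set.Icc (0:ℝ) 1, ∀ x ∈ 𝓚, |t - t₀| < δ → ‖x - x₀‖ < δ →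
        (⋃ s ∈ Set.Icc (0:ℝ) t, F s x) ⊆
          {y : E | Metric.infDist y (⋃ s ∈ Set.Icc (0:ℝ) t₀, F s x₀) < ε}) ∧
    -- (ii) F̂ is H-usc
    (∀ t₀ ∈ Set.Icc (0:ℝ) 1, ∀ x₀ ∈ 𝓚, ∀ ε > (0:ℝ), ∃ δ > (0:ℝ),
      ∀ t ∈ Set.Icc (0:ℝ) 1, ∀ x ∈ 𝓚, |t - t₀| < δ → ‖x - x₀‖ < δ →
        Fhat t x ⊆ {y : E | Metric.infDist y (Fhat t₀ x₀) < ε}) ∧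
    -- (iii) nonempty closed convex values with sublinear growth
    (∀ t ∈ Set.Icc (0:ℝ) 1, ∀ x ∈ 𝓚, (Fhat t x).Nonempty ∧ IsClosed (Fhat t x) ∧
      Convex ℝ (Fhat t x) ∧ ∀ y ∈ Fhat t x, ‖y‖ ≤ c * (1 + ‖x‖)) ∧
    -- (iv) F̂ is tangent to 𝓚
    (∀ t ∈ Set.Icc (0:ℝ) 1, ∀ x ∈ 𝓚,
      (Fhat t x ∩
        closure (⋃ h ∈ Set.Ioi (0:ℝ), (fun k => h⁻¹ • (k - x)) '' 𝓚)).Nonempty) := by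
  -- self-membership of F t x in the union
  have hsub : ∀ t, 0 ≤ t → ∀ x, F t x ⊆ ⋃ s ∈ Set.Icc (0:ℝ) t, F s x := by
    intro t ht x
    exact subset_iUnion₂ (s := fun s _ => F s x) t ⟨ht, le_refl t⟩
  have hUne : ∀ t ∈ Set.Icc (0:ℝ) 1, ∀ x ∈ 𝓚, (⋃ s ∈ Set.Icc (0:ℝ) t, F s x).Nonempty := by
    intro t ht x hx
    obtain ⟨y, hy⟩ := hFne t ht x hx
    exact ⟨y, hsub t ht.1 x hy⟩
  -- Part (i)
  have part1 : ∀ t₀ ∈ Set.Icc (0:ℝ) 1, ∀ x₀ ∈ 𝓚, ∀ ε > (0:ℝ), ∃ δ > (0:ℝ),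
      ∀ t ∈ Set.Icc (0:ℝ) 1, ∀ x ∈ 𝓚, |t - t₀| < δ → ‖x - x₀‖ < δ →
        (⋃ s ∈ Set.Icc (0:ℝ) t, F s x) ⊆
          {y : E | Metric.infDist y (⋃ s ∈ Set.Icc (0:ℝ) t₀, F s x₀) < ε} := by
    intro t₀ ht₀ x₀ hx₀ ε hε
    have hchoice : ∀ s : ℝ, s ∈ Set.Icc (0:ℝ) 1 → ∃ δ > (0:ℝ),
        ∀ t ∈ Set.Icc (0:ℝ) 1, ∀ x ∈ 𝓚, |t - s| < δ → ‖x - x₀‖ < δ →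
          F t x ⊆ {y : E | Metric.infDist y (F s x₀) < ε} :=
      fun s hs => hFusc s hs x₀ hx₀ ε hε
    set δf : ℝ → ℝ := fun s =>
      if hs : s ∈ Set.Icc (0:ℝ) 1 then (hchoice s hs).choose else 1 with hδf
    have hδf_pos : ∀ s, 0 < δf s := by
      intro s
      by_cases hs : s ∈ Set.Icc (0:ℝ) 1
      · simp only [hδf, dif_pos hs]
        exact (hchoice s hs).choose_spec.1
      · simp only [hδf, dif_neg hs]
        norm_num
    have hδf_spec : ∀ s (hs : s ∈ Set.Icc (0:ℝ) 1),
        ∀ t ∈ Set.Icc (0:ℝ) 1, ∀ x ∈ 𝓚, |t - s| < δf s → ‖x - x₀‖ < δf s →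
          F t x ⊆ {y : E | Metric.infDist y (F s x₀) < ε} := by
      intro s hs
      have : δf s = (hchoice s hs).choose := by rw [hδf]; simp [hs]
      rw [this]
      exact (hchoice s hs).choose_spec.2
    obtain ⟨S, hS_mem, hS_cover⟩ := (isCompact_Icc (a := (0:ℝ)) (b := t₀)).elim_nhds_subcover
      (fun s => ball s (δf s / 2)) (fun s _ => ball_mem_nhds s (by have := hδf_pos s; linarith))
    have hSne : S.Nonempty := by
      have ht₀m : t₀ ∈ ⋃ s ∈ S, ball s (δf s / 2) := hS_cover ⟨ht₀.1, le_refl t₀⟩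
      simp only [mem_iUnion] at ht₀m
      obtain ⟨s, hs, _⟩ := ht₀m
      exact ⟨s, hs⟩
    refine ⟨S.inf' hSne (fun s => δf s / 2), ?_, ?_⟩
    · rw [gt_iff_lt, Finset.lt_inf'_iff]
      intro s _
      have := hδf_pos s
      linarith
    · intro t ht x hx htt hxx y hy
      simp only [mem_iUnion, exists_prop] at hy
      obtain ⟨s, hs, hys⟩ := hy
      have hst : s ≤ t := hs.2
      set δ := S.inf' hSne (fun s => δf s / 2) with hδdef
      have hs1 : s ∈ Set.Icc (0:ℝ) 1 := ⟨hs.1, hs.2.trans ht.2⟩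
      have hm : min s t₀ ∈ Set.Icc (0:ℝ) t₀ := ⟨le_min hs.1 ht₀.1, min_le_right _ _⟩
      have hmem := hS_cover hm
      simp only [mem_iUnion, exists_prop] at hmem
      obtain ⟨u, huS, humem⟩ := hmem
      have hu0 : u ∈ Set.Icc (0:ℝ) t₀ := hS_mem u huS
      have hu1 : u ∈ Set.Icc (0:ℝ) 1 := ⟨hu0.1, hu0.2.trans ht₀.2⟩
      have hδle : δ ≤ δf u / 2 := Finset.inf'_le _ huS
      have h1 : |s - min s t₀| < δ := by
        rcases le_total s t₀ with h | h
        · simp only [min_eq_left h, sub_self, abs_zero]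
          rw [hδdef, Finset.lt_inf'_iff]
          intro v _
          have := hδf_pos v; linarith
        · rw [min_eq_right h, abs_of_nonneg (by linarith)]
          have h2 : t - t₀ ≤ |t - t₀| := le_abs_self _
          have h3 : s - t₀ ≤ t - t₀ := by linarith
          linarith
      have h2 : |min s t₀ - u| < δf u / 2 := by
        have := mem_ball_iff_norm.1 humem
        rwa [Real.norm_eq_abs] at this
      have h3 : |s - u| < δf u := by
        have : |s - u| ≤ |s - min s t₀| + |min s t₀ - u| := by
          calc |s - u| = |(s - min s t₀) + (min s t₀ - u)| := by ring_nf
            _ ≤ |s - min s t₀| + |min s t₀ - u| := abs_add_le _ _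
        linarith
      have h4 : ‖x - x₀‖ < δf u := by
        have := hδf_pos u; linarith
      have h5 := hδf_spec u hu1 s hs1 x hx h3 h4 hys
      have h6 : Metric.infDist y (⋃ s ∈ Set.Icc (0:ℝ) t₀, F s x₀) ≤
          Metric.infDist y (F u x₀) :=
        infDist_le_infDist_of_subset
          (subset_iUnion₂ (s := fun s _ => F s x₀) u hu0) (hFne u hu1 x₀ hx₀)
      exact lt_of_le_of_lt h6 h5
  refine ⟨part1, ?_, ?_, ?_⟩
  -- Part (ii)
  · intro t₀ ht₀ x₀ hx₀ ε hε
    obtain ⟨δ, hδ, hδspec⟩ := part1 t₀ ht₀ x₀ hx₀ (ε/2) (by linarith)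
    refine ⟨δ, hδ, ?_⟩
    intro t ht x hx htt hxx y hy
    rw [hFhat] at hy
    have := hull_infDist_transfer (hUne t₀ ht₀ x₀ hx₀) (le_of_lt (by linarith : (0:ℝ) < ε/2))
      (fun z hz => hδspec t ht x hx htt hxx hz) y hy
    rw [hFhat]
    simp only [mem_setOf_eq]
    linarith
  -- Part (iii)
  · intro t ht x hx
    rw [hFhat]
    refine ⟨?_, isClosed_closure, (convex_convexHull ℝ _).closure, ?_⟩
    · obtain ⟨y, hy⟩ := hUne t ht x hx
      exact ⟨y, subset_closure (subset_convexHull ℝ _ hy)⟩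
    · intro y hy
      have hball : (⋃ s ∈ Set.Icc (0:ℝ) t, F s x) ⊆ closedBall 0 (c * (1 + ‖x‖)) := by
        intro z hz
        simp only [mem_iUnion, exists_prop] at hz
        obtain ⟨s, hs, hzs⟩ := hz
        have hs1 : s ∈ Set.Icc (0:ℝ) 1 := ⟨hs.1, hs.2.trans ht.2⟩
        rw [mem_closedBall, dist_zero_right]
        exact hF3 s hs1 x hx z hzs
      have h1 : convexHull ℝ (⋃ s ∈ Set.Icc (0:ℝ) t, F s x) ⊆ closedBall 0 (c * (1 + ‖x‖)) :=
        convexHull_min hball (convex_closedBall _ _)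
      have h2 : closure (convexHull ℝ (⋃ s ∈ Set.Icc (0:ℝ) t, F s x)) ⊆
          closedBall 0 (c * (1 + ‖x‖)) :=
        closure_minimal h1 isClosed_closedBall
      have := h2 hy
      rwa [mem_closedBall, dist_zero_right] at this
  -- Part (iv)
  · intro t ht x hx
    obtain ⟨y, hy1, hy2⟩ := hF4 t ht x hx
    refine ⟨y, ?_, hy2⟩
    rw [hFhat]
    exact subset_closure (subset_convexHull ℝ _ (hsub t ht.1 x hy1))
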